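/- Two distinct selected labels ℓ and ℓ' do not overlap only if no edge covered by ℓ is an internal (completely covered) edge of ℓ'; equivalently, if some edge covered by ℓ is completely covered by ℓ', then ℓ and ℓ' overlap. -/

import Mathlib

open Classical
noncomputable section

/-- An abstract road graph: a (multi)graph with directed edge incidences,
a partition of edges into road sections (`isRS`) and junction edges,
a road assignment, and a positive length for each edge. -/
structure RoadGraph (V E : Type) where
  inc : E → V × V
  isRS : E → Prop
  road : E → ℕ
  len : E → ℝ
  len_pos : ∀ e, 0 < len e

namespace RoadGraph

variable {V E : Type}

/-- A (candidate) label: the path of covered edges together with the head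
offset `s` on the first edge and the tail offset `t` on the last edge. -/
structure Lab (E : Type) where
  path : List E
  s : ℝ
  t : ℝ

/-- The internal (completely covered) edges of a label. -/
def Lab.interiorEdges (ℓ : Lab E) : List E := (ℓ.path.drop 1).dropLast

/-- The set of covered positions of a label on an edge `e`. -/
noncomputable def coveredSet (G : RoadGraph V E) (ℓ : Lab E) (e : E) : Set ℝ :=
  if ℓ.path.length = 1 then (if ℓ.path = [e] then Set.Icc ℓ.s ℓ.t else ∅)
  else if ℓ.path.head? = some e then Set.Icc ℓ.s (G.len e)
  else if ℓ.path.getLast? = some e then Set.Icc 0 ℓ.t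
  else if e ∈ ℓ.path then Set.Icc 0 (G.len e) else ∅

/-- The length of the curve described by a label. -/
noncomputable def labLength (G : RoadGraph V E) (ℓ : Lab E) : ℝ :=
  match ℓ.path with
  | [] => 0
  | [e] => ℓ.t - ℓ.s
  | e :: rest => (G.len e - ℓ.s) + ((rest.dropLast).map G.len).sum + ℓ.t

/-- Validity of a label w.r.t. the road graph `G` and the road-name lengths `lam`:
the covered edges form a nonempty simple directed path of edges of one road,
the label starts and ends on road sections with offsets inside the edges,
and the total length equals the name length of the road. -/
def Valid (G : RoadGraph V E) (lam : ℕ → ℝ) (ℓ : Lab E) : Prop :=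
  ℓ.path ≠ [] ∧ ℓ.path.Nodup ∧
  List.Chain' (fun e f => (G.inc e).2 = (G.inc f).1) ℓ.path ∧
  (∀ e ∈ ℓ.path, ∀ f ∈ ℓ.path, G.road e = G.road f) ∧
  (∀ e, ℓ.path.head? = some e → G.isRS e ∧ 0 ≤ ℓ.s ∧ ℓ.s ≤ G.len e) ∧
  (∀ e, ℓ.path.getLast? = some e → G.isRS e ∧ 0 ≤ ℓ.t ∧ ℓ.t ≤ G.len e) ∧
  (ℓ.path.length = 1 → ℓ.s ≤ ℓ.t) ∧
  (∀ e, ℓ.path.head? = some e → labLength G ℓ = lam (G.road e))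

/-- `(e, x)` is the head or the tail point of the label `ℓ`. -/
def isEndPt (ℓ : Lab E) (e : E) (x : ℝ) : Prop :=
  (ℓ.path.head? = some e ∧ x = ℓ.s) ∨ (ℓ.path.getLast? = some e ∧ x = ℓ.t)

/-- Two labels overlap if they share a point that is not the head/tail of both. -/
def Overlap (G : RoadGraph V E) (ℓ ℓ' : Lab E) : Prop :=
  ∃ e x, x ∈ coveredSet G ℓ e ∧ x ∈ coveredSet G ℓ' e ∧
    ¬(isEndPt ℓ e x ∧ isEndPt ℓ' e x)

/-- A labeling: a set of valid, well-shaped, mutually non-overlapping labels. -/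
def IsLabeling (G : RoadGraph V E) (lam : ℕ → ℝ) (WS : Lab E → Prop)
    (L : Set (Lab E)) : Prop :=
  (∀ ℓ ∈ L, Valid G lam ℓ ∧ WS ℓ) ∧
  (∀ ℓ ∈ L, ∀ ℓ' ∈ L, ℓ ≠ ℓ' → ¬ Overlap G ℓ ℓ')

/-- The set of road sections labeled by a set of labels. -/
def labeledSecs (G : RoadGraph V E) (L : Set (Lab E)) : Set E :=
  {e | G.isRS e ∧ ∃ ℓ ∈ L, e ∈ ℓ.path}

/-- The number of labeled road sections. -/
noncomputable def countLabeled (G : RoadGraph V E) (L : Set (Lab E)) : ℕ :=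
  (labeledSecs G L).ncard

/-- An optimal labeling: a solution of MaxTotalCovering. -/
def Optimal (G : RoadGraph V E) (lam : ℕ → ℝ) (WS : Lab E → Prop)
    (L : Set (Lab E)) : Prop :=
  IsLabeling G lam WS L ∧
  ∀ L', IsLabeling G lam WS L' → countLabeled G L' ≤ countLabeled G L

/-- A well-shaped label fits entirely on the road section `e`. -/
def Stub (G : RoadGraph V E) (lam : ℕ → ℝ) (WS : Lab E → Prop) (e : E) : Prop :=
  G.isRS e ∧ ∃ ℓ : Lab E, Valid G lam ℓ ∧ WS ℓ ∧ ℓ.path = [e]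

/-- Edge `e` is incident to vertex `v`. -/
def incident (G : RoadGraph V E) (e : E) (v : V) : Prop :=
  (G.inc e).1 = v ∨ (G.inc e).2 = v

/-- One step through a junction edge. -/
def JStep (G : RoadGraph V E) (v w : V) : Prop :=
  ∃ f, ¬ G.isRS f ∧ ((G.inc f) = (v, w) ∨ (G.inc f) = (w, v))

/-- Reachability through junction edges only. -/
def JReach (G : RoadGraph V E) : V → V → Prop := Relation.ReflTransGen (JStep G)

/-- `Re G e u`: road sections of the road of `e` reachable from `u`
when traversing junction edges only. -/
def Re (G : RoadGraph V E) (e : E) (u : V) : Set E :=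
  {e' | G.isRS e' ∧ G.road e' = G.road e ∧ ∃ v, JReach G u v ∧ incident G e' v}

end RoadGraph

open RoadGraph in
/-- If some edge covered by `ℓ` is an internal (completely
covered) edge of `ℓ'`, then `ℓ` and `ℓ'` overlap. -/
theorem stmt7 {V E : Type} (G : RoadGraph V E) (lam : ℕ → ℝ)
    (ℓ ℓ' : Lab E) (hv : Valid G lam ℓ) (hv' : Valid G lam ℓ')
    (e : E) (he : e ∈ ℓ.path) (hint : e ∈ ℓ'.interiorEdges) :
    Overlap G ℓ ℓ' := by
  obtain ⟨hne', hnd', -, -, -, -, -, -⟩ := hv'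
  unfold Lab.interiorEdges at hint
  have hmem' : e ∈ ℓ'.path := List.mem_of_mem_drop (List.mem_of_mem_dropLast hint)
  have hhead : ℓ'.path.head? ≠ some e := by
    intro h
    cases hpath : ℓ'.path with
    | nil => simp [hpath] at h
    | cons a rest =>
      rw [hpath] at h hint hnd'
      simp only [List.head?_cons, Option.some.injEq] at h
      have h1 : e ∈ rest := List.mem_of_mem_dropLast (by simpa using hint)
      rw [h] at hnd'
      exact (List.nodup_cons.mp hnd').1 h1
  have hdl : e ∈ ℓ'.path.dropLast := by
    cases hpath : ℓ'.path with
    | nil => rw [hpath] at hint; simp at hint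
    | cons a rest =>
      rw [hpath] at hint
      simp only [List.drop_succ_cons, List.drop_zero] at hint
      cases rest with
      | nil => simp at hint
      | cons b r =>
        rw [List.dropLast_cons₂]
        exact List.mem_cons_of_mem a hint
  have hlast : ℓ'.path.getLast? ≠ some e := by
    intro h
    have hsplit := List.dropLast_append_getLast? e h
    rw [← hsplit] at hnd'
    have := (List.nodup_append'.mp hnd').2.2
    exact this hdl (by simp)
  have hlen1 : ℓ'.path.length ≠ 1 := by
    intro h
    cases hpath : ℓ'.path with
    | nil => simp [hpath] at h
    | cons a rest =>
      rw [hpath] at h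
      simp only [List.length_cons, Nat.add_eq_right, List.length_eq_zero_iff] at h
      rw [hpath, h] at hint
      simp at hint
  have hcov' : coveredSet G ℓ' e = Set.Icc 0 (G.len e) := by
    unfold coveredSet
    rw [if_neg hlen1, if_neg hhead, if_neg hlast, if_pos hmem']
  have hlenpos := G.len_pos e
  obtain ⟨x, hx1, hx2⟩ : ∃ x, x ∈ coveredSet G ℓ e ∧ x ∈ Set.Icc 0 (G.len e) := by
    obtain ⟨hne, -, -, -, hh, hl, hst, -⟩ := hv
    unfold coveredSet
    by_cases h1 : ℓ.path.length = 1
    · have hpe : ℓ.path = [e] := by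
        cases hpath : ℓ.path with
        | nil => simp [hpath] at h1
        | cons a rest =>
          rw [hpath] at h1 he
          simp only [List.length_cons, Nat.add_eq_right, List.length_eq_zero_iff] at h1
          rw [h1] at he ⊢
          simp only [List.mem_singleton] at he
          rw [he]
      obtain ⟨-, hs0, hsl⟩ := hh e (by rw [hpe]; rfl)
      rw [if_pos h1, if_pos hpe]
      exact ⟨ℓ.s, ⟨le_refl _, hst h1⟩, hs0, hsl⟩
    · rw [if_neg h1]
      by_cases h2 : ℓ.path.head? = some e
      · rw [if_pos h2]
        obtain ⟨-, hs0, hsl⟩ := hh e h2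
        exact ⟨G.len e, ⟨hsl, le_refl _⟩, le_of_lt hlenpos, le_refl _⟩
      · rw [if_neg h2]
        by_cases h3 : ℓ.path.getLast? = some e
        · rw [if_pos h3]
          obtain ⟨-, ht0, htl⟩ := hl e h3
          exact ⟨0, ⟨le_refl _, ht0⟩, le_refl _, le_of_lt hlenpos⟩
        · rw [if_neg h3, if_pos he]
          exact ⟨0, ⟨le_refl _, le_of_lt hlenpos⟩, le_refl _, le_of_lt hlenpos⟩
  refine ⟨e, x, hx1, by rw [hcov']; exact hx2, ?_⟩
  rintro ⟨-, h' | h'⟩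
  · exact hhead h'.1
  · exact hlast h'.1
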